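/- If m is odd, then M_{q,m} is a nontrivial difference set in F_q if and only if (q, m) = (16, 3); in that case M_{16,3} is a (16, 6, 2)-difference set in F_16. -/

import Mathlib

/-- `D` is a `(q, k, l)`-difference set in the additive group `F` (with `q = |F|`). -/
def IsDiffSet {F : Type*} [AddGroup F] (D : Set F) (k l : ℕ) : Prop :=
  D.ncard = k ∧
    ∀ a : F, a ≠ 0 → {x : F × F | x.1 ∈ D ∧ x.2 ∈ D ∧ x.1 - x.2 = a}.ncard = l

/-- `D` is a nontrivial difference set: a `(q, k, l)`-difference set of order `k - l > 1`. -/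
def IsNontrivialDiffSet {F : Type*} [AddGroup F] (D : Set F) : Prop :=
  ∃ k l : ℕ, IsDiffSet D k l ∧ 1 < k - l

/-- The set of nonzero `m`-th powers in `F`. -/
def Hset (F : Type*) [Field F] (m : ℕ) : Set F :=
  {x : F | x ≠ 0 ∧ ∃ y : F, y ^ m = x}

/-- The set of `m`-th powers in `F`, including `0`. -/
def Mset (F : Type*) [Field F] (m : ℕ) : Set F :=
  Hset F m ∪ {0}

lemma hset_eq (F : Type*) [Field F] [Fintype F] {m f : ℕ} (hm : 0 < m) (hf : 0 < f)
    (hcard : Fintype.card F = m * f + 1) :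
    Hset F m = {x : F | x ^ f = 1} := by
  classical
  ext x
  constructor
  · rintro ⟨hx0, y, rfl⟩
    have hy0 : y ≠ 0 := by rintro rfl; simp [zero_pow hm.ne'] at hx0
    have : y ^ (Fintype.card F - 1) = 1 := FiniteField.pow_card_sub_one_eq_one y hy0
    simpa [hcard, ← pow_mul] using this
  · intro hx
    have hx0 : x ≠ 0 := by rintro rfl; simp [zero_pow hf.ne'] at hx
    obtain ⟨g, hg⟩ := IsCyclic.exists_generator (α := Fˣ)
    have hog : orderOf g = m * f := by
      rw [orderOf_eq_card_of_forall_mem_zpowers hg, Nat.card_eq_fintype_card,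
        Fintype.card_units, hcard]; simp
    set u := Units.mk0 x hx0 with hu
    have huf : u ^ f = 1 := by
      ext; simpa [hu] using hx
    obtain ⟨j, hj'⟩ := (mem_powers_iff_mem_zpowers).2 (hg u)
    have hj : g ^ j = u := hj'
    have : g ^ (j * f) = 1 := by rw [pow_mul, hj, huf]
    have hdvd : m * f ∣ j * f := by rwa [← hog, orderOf_dvd_iff_pow_eq_one]
    have hmj : m ∣ j := (mul_dvd_mul_iff_right hf.ne').1 hdvd
    obtain ⟨d, rfl⟩ := hmj
    refine ⟨hx0, ((g ^ d : Fˣ) : F), ?_⟩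
    rw [← Units.val_pow_eq_pow_val, ← pow_mul, mul_comm d m, hj]
    rfl

lemma hset_ncard (F : Type*) [Field F] [Fintype F] {m f : ℕ} (hm : 0 < m) (hf : 0 < f)
    (hcard : Fintype.card F = m * f + 1) :
    (Hset F m).ncard = f := by
  classical
  obtain ⟨g, hg⟩ := IsCyclic.exists_generator (α := Fˣ)
  have hog : orderOf g = m * f := by
    rw [orderOf_eq_card_of_forall_mem_zpowers hg, Nat.card_eq_fintype_card,
      Fintype.card_units, hcard]; simp
  have h1 : (g ^ m) ^ f = 1 := by rw [← pow_mul, ← hog, pow_orderOf_eq_one]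
  have hset2 : Hset F m = (Units.val) '' ((Subgroup.zpowers (g ^ m) : Subgroup Fˣ) : Set Fˣ) := by
    rw [hset_eq F hm hf hcard]
    ext x
    constructor
    · intro hx
      have hx0 : x ≠ 0 := by rintro rfl; simp [zero_pow hf.ne'] at hx
      set u := Units.mk0 x hx0 with hu
      have huf : u ^ f = 1 := by ext; simpa [hu] using hx
      obtain ⟨j, hj'⟩ := (mem_powers_iff_mem_zpowers).2 (hg u)
      have hj : g ^ j = u := hj'
      have : g ^ (j * f) = 1 := by rw [pow_mul, hj, huf]
      have hdvd : m * f ∣ j * f := by rwa [← hog, orderOf_dvd_iff_pow_eq_one]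
      obtain ⟨d, rfl⟩ := (mul_dvd_mul_iff_right hf.ne').1 hdvd
      refine ⟨u, ⟨(d : ℤ), ?_⟩, rfl⟩
      show (g ^ m) ^ (d : ℤ) = u
      rw [zpow_natCast, ← pow_mul, hj]
    · rintro ⟨u, ⟨d, rfl⟩, rfl⟩
      show ((g ^ m) ^ (d : ℤ)).val ^ f = 1
      have h2 : ((g ^ m) ^ (d:ℤ)) ^ f = 1 := by
        rw [← zpow_natCast ((g^m)^(d:ℤ)) f, ← zpow_mul, mul_comm, zpow_mul, zpow_natCast, h1,
          one_zpow]
      rw [← Units.val_pow_eq_pow_val, h2, Units.val_one]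
  rw [hset2, Set.ncard_image_of_injective _ Units.val_injective]
  have : ((Subgroup.zpowers (g ^ m) : Subgroup Fˣ) : Set Fˣ).ncard
      = Nat.card (Subgroup.zpowers (g ^ m)) := by
    rw [← Nat.card_coe_set_eq]
    rfl
  rw [this, Nat.card_zpowers, orderOf_pow]
  rw [hog]
  rw [Nat.gcd_comm]
  have : Nat.gcd m (m * f) = m := Nat.gcd_eq_left (dvd_mul_right m f)
  rw [this, Nat.mul_div_cancel_left f hm]

lemma mset_ncard (F : Type*) [Field F] [Fintype F] {m f : ℕ} (hm : 0 < m) (hf : 0 < f)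
    (hcard : Fintype.card F = m * f + 1) :
    (Mset F m).ncard = f + 1 := by
  have h0 : (0 : F) ∉ Hset F m := fun h => h.1 rfl
  rw [Mset, Set.union_singleton, Set.ncard_insert_of_notMem h0 (Set.toFinite _),
    hset_ncard F hm hf hcard]

open Polynomial Finset in
lemma solve_quadratic (F : Type*) [Field F] [Fintype F] (hcard : Fintype.card F = 16)
    (h2 : (2:F) = 0) (c : F) (hc : c + c^2 + c^4 + c^8 = 0) : ∃ z : F, z^2 + z = c := by
  classical
  set φ : F → F := fun z => z^2 + z with hφ
  have hfib : ∀ b ∈ Finset.univ.image φ, (Finset.univ.filter fun z => φ z = b).card ≤ 2 := by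
    intro b hb
    simp only [Finset.mem_image] at hb
    obtain ⟨z, _, hz⟩ := hb
    have hsub : (Finset.univ.filter fun w => φ w = b) ⊆ {z, z + 1} := by
      intro w hw
      simp only [Finset.mem_filter] at hw
      have hw2 : φ w = φ z := by rw [hw.2, hz]
      have hzero : (w - z) * (w + z + 1) = 0 := by
        have : (w^2 + w) - (z^2 + z) = 0 := by
          have := hw2; simp only [hφ] at this; rw [this]; ring
        linear_combination this
      simp only [Finset.mem_insert, Finset.mem_singleton]
      rcases mul_eq_zero.1 hzero with h | h
      · left; linear_combination h
      · right; linear_combination h - (z+1)*h2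
    calc (Finset.univ.filter fun w => φ w = b).card ≤ ({z, z+1} : Finset F).card :=
          Finset.card_le_card hsub
      _ ≤ 2 := Finset.card_insert_le _ _ |>.trans (by simp)
  have himcard : 8 ≤ (Finset.univ.image φ).card := by
    have := Finset.card_le_mul_card_image (Finset.univ : Finset F) 2 hfib
    rw [Finset.card_univ, hcard] at this
    omega
  set pT : F[X] := X^8 + X^4 + X^2 + X with hpT
  have hdeg : pT.natDegree = 8 := by rw [hpT]; compute_degree!
  have hpT0 : pT ≠ 0 := fun h => by rw [h] at hdeg; simp at hdeg
  have hroots : (Finset.univ.image φ) ⊆ pT.roots.toFinset := by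
    intro b hb
    simp only [Finset.mem_image] at hb
    obtain ⟨z, _, hz⟩ := hb
    have hz16 : z ^ 16 = z := by rw [← hcard]; exact FiniteField.pow_card z
    have heval : pT.eval b = 0 := by
      simp only [hpT, eval_add, eval_pow, eval_X]
      rw [← hz]
      simp only [hφ]
      linear_combination hz16 + (4*z^15 + 14*z^14 + 28*z^13 + 35*z^12 + 28*z^11 + 14*z^10
        + 4*z^9 + z^8 + 2*z^7 + 3*z^6 + 2*z^5 + z^4 + z^3 + z^2 + z)*h2
    simp only [Multiset.mem_toFinset, Polynomial.mem_roots', IsRoot.def]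
    exact ⟨hpT0, heval⟩
  have hrcard : pT.roots.toFinset.card ≤ 8 := by
    calc pT.roots.toFinset.card ≤ Multiset.card pT.roots := Multiset.toFinset_card_le _
      _ ≤ pT.natDegree := Polynomial.card_roots' pT
      _ = 8 := hdeg
  have heq : Finset.univ.image φ = pT.roots.toFinset :=
    Finset.eq_of_subset_of_card_le hroots (hrcard.trans himcard)
  have hcroot : c ∈ pT.roots.toFinset := by
    simp only [Multiset.mem_toFinset, Polynomial.mem_roots', IsRoot.def]
    refine ⟨hpT0, ?_⟩
    simp only [hpT, eval_add, eval_pow, eval_X]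
    linear_combination hc
  rw [← heq] at hcroot
  simp only [Finset.mem_image] at hcroot
  obtain ⟨z, _, hz⟩ := hcroot
  exact ⟨z, hz⟩


lemma char_two_of_card16 (F : Type*) [Field F] [Fintype F] (hcard : Fintype.card F = 16) :
    (2 : F) = 0 := by
  have hring : CharP F (ringChar F) := ringChar.charP F
  obtain ⟨n, hp, hc⟩ := FiniteField.card F (ringChar F)
  rw [hcard] at hc
  have hdvd : ringChar F ∣ 16 := by
    rw [hc]; exact dvd_pow_self _ (by positivity)
  have h2 : ringChar F = 2 := by
    have : ringChar F ∣ 2 := hp.dvd_of_dvd_pow (show ringChar F ∣ 2^4 by norm_num [hdvd])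
    rcases (Nat.le_of_dvd (by norm_num) this) with _
    interval_cases h : ringChar F <;> simp_all <;> omega
  have : CharP F 2 := h2 ▸ hring
  have := CharP.cast_eq_zero F 2
  exact_mod_cast this

lemma partA (F : Type*) [Field F] [Fintype F] (hcard : Fintype.card F = 16) :
    IsDiffSet (Mset F 3) 6 2 := by
  classical
  have h2 : (2:F) = 0 := char_two_of_card16 F hcard
  have hcard' : Fintype.card F = 3 * 5 + 1 := by rw [hcard]
  have hmem : ∀ x : F, x ∈ Mset F 3 ↔ x ^ 5 = 1 ∨ x = 0 := by
    intro x
    rw [Mset, hset_eq F (by norm_num) (by norm_num) hcard']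
    simp only [Set.mem_union, Set.mem_setOf_eq, Set.mem_singleton_iff]
  constructor
  · exact mset_ncard F (by norm_num) (by norm_num) hcard'
  · intro a ha
    -- reduce pairs to shifts
    have hPY : {x : F × F | x.1 ∈ Mset F 3 ∧ x.2 ∈ Mset F 3 ∧ x.1 - x.2 = a}
        = (fun y => (y + a, y)) '' {y : F | y ∈ Mset F 3 ∧ y + a ∈ Mset F 3} := by
      ext ⟨x, y⟩
      simp only [Set.mem_setOf_eq, Set.mem_image, Prod.mk.injEq]
      constructor
      · rintro ⟨h1, h2', h3⟩
        have hx : x = y + a := by linear_combination h3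
        exact ⟨y, ⟨h2', hx ▸ h1⟩, hx.symm, rfl⟩
      · rintro ⟨y', ⟨hy1, hy2⟩, hh1, hh2⟩
        subst hh2; subst hh1
        exact ⟨hy2, hy1, by ring⟩
    have hinj : Function.Injective (fun y : F => (y + a, y)) := fun y1 y2 h => by
      simpa using congrArg Prod.snd h
    rw [hPY, Set.ncard_image_of_injective _ hinj]
    have ha15 : a ^ 15 = 1 := by
      have := FiniteField.pow_card_sub_one_eq_one a ha
      rwa [hcard] at this
    by_cases hu : a ^ 5 = 1
    · -- Y = {0, a}
      have haa : a + a = 0 := by linear_combination a * h2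
      have hY : {y : F | y ∈ Mset F 3 ∧ y + a ∈ Mset F 3} = {0, a} := by
        ext y
        simp only [Set.mem_setOf_eq, Set.mem_insert_iff, Set.mem_singleton_iff, hmem]
        constructor
        · rintro ⟨hy, hya⟩
          by_contra hcon
          push_neg at hcon
          obtain ⟨hy0, hyA⟩ := hcon
          have hy5 : y ^ 5 = 1 := by
            rcases hy with h | h
            · exact h
            · exact absurd h hy0
          have hya0 : y + a ≠ 0 := by
            intro h
            apply hyA
            linear_combination h - a*h2
          have hya5 : (y + a) ^ 5 = 1 := by
            rcases hya with h | h
            · exact h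
            · exact absurd h hya0
          apply hyA
          -- the char-2 chain forcing y = a
          have h1 : y^4*a + y*a^4 = 1 := by
            linear_combination hya5 - hy5 - hu - (2*y^4*a+5*y^3*a^2+5*y^2*a^3+2*y*a^4)*h2 - h2
          have hstep : a + a^4*y^2 = y := by linear_combination y*h1 - a*hy5
          have hquad : y^2 + a*y + a^2 = 0 := by linear_combination a*hstep - y^2*hu + a*y*h2
          have hcube : y^3 = a^3 := by linear_combination (y+a)*hquad - (a*y^2+a^2*y+a^3)*h2
          linear_combination (y^3+a^3)*hcube - y*hy5 + a*hu
        · rintro (rfl | rfl)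
          · constructor
            · right; rfl
            · left; simpa using hu
          · constructor
            · left; exact hu
            · right; exact haa
      rw [hY, Set.ncard_pair (Ne.symm ha)]
    · -- a^5 ≠ 1 case
      have hu2' : a^10 + a^5 + 1 = 0 := by
        have hfac : (a^5 - 1) * (a^10 + a^5 + 1) = 0 := by linear_combination ha15
        rcases mul_eq_zero.1 hfac with h | h
        · exact absurd (by linear_combination h) hu
        · exact h
      -- quadratic implies fifth power one
      have key0 : ∀ y : F, a^3*y^2 + a^4*y + 1 = 0 → y ^ 5 = 1 := by
        intro y hR
        have hs1 : y^2 = a*y + a^12 := by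
          linear_combination a^12*hR - (y^2+a*y)*ha15 - (a*y+a^12)*h2
        have hs2 : y^4 = a^3*y + a^14 + a^9 := by
          linear_combination (y^2+a*y+a^12)*hs1 + a^2*hs1 + a^9*ha15 + a^13*y*h2
        linear_combination y*hs2 + a^3*hs1 + ha15 + a^4*y*hu2'
      -- solve z^2 + z = a^10
      obtain ⟨z, hz⟩ := solve_quadratic F hcard h2 (a^10)
        (by linear_combination (a^5 + a^10*(a^15+1) + a^5*(a^60+a^45+a^30+a^15+1))*ha15
              + (a^10+a^5)*h2)
      have hfact : ∀ y : F, a^3*(y - a*z)*(y - (a*z+a)) = a^3*y^2 + a^4*y + 1 := by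
        intro y
        linear_combination a^5*hz + ha15 - (a^4*z*y + a^4*y)*h2
      have ha3 : a^3 ≠ 0 := pow_ne_zero _ ha
      have hYR : {y : F | y ∈ Mset F 3 ∧ y + a ∈ Mset F 3}
          = {y : F | a^3*y^2 + a^4*y + 1 = 0} := by
        ext y
        simp only [Set.mem_setOf_eq, hmem]
        constructor
        · rintro ⟨hy, hya⟩
          have hy0 : y ≠ 0 := by
            rintro rfl
            rcases hya with h | h
            · rw [zero_add] at h; exact hu h
            · rw [zero_add] at h; exact ha h
          have hy5 : y ^ 5 = 1 := by
            rcases hy with h | h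
            · exact h
            · exact absurd h hy0
          have hya0 : y + a ≠ 0 := by
            intro h
            have hy' : y = a := by linear_combination h - a*h2
            rcases hy with hh | hh
            · rw [hy'] at hh; exact hu hh
            · rw [hy'] at hh; exact ha hh
          have hya5 : (y + a) ^ 5 = 1 := by
            rcases hya with h | h
            · exact h
            · exact absurd h hya0
          have hA : y^4*a + y*a^4 + a^5 = 0 := by
            linear_combination hya5 - hy5 - (2*y^4*a+5*y^3*a^2+5*y^2*a^3+2*y*a^4)*h2
          have haR : a*(a^3*y^2 + a^4*y + 1) = 0 := by linear_combination y*hA - a*hy5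
          rcases mul_eq_zero.1 haR with h | h
          · exact absurd h ha
          · exact h
        · intro hR
          have hy5 := key0 y hR
          have hyaR : a^3*(y+a)^2 + a^4*(y+a) + 1 = 0 := by
            linear_combination hR + (a^4*y+a^5)*h2
          exact ⟨Or.inl hy5, Or.inl (key0 (y+a) hyaR)⟩
      rw [hYR]
      have hset2 : {y : F | a^3*y^2 + a^4*y + 1 = 0} = {a*z, a*z + a} := by
        ext y
        simp only [Set.mem_setOf_eq, Set.mem_insert_iff, Set.mem_singleton_iff]
        constructor
        · intro hR
          have : a^3*(y - a*z)*(y - (a*z+a)) = 0 := by rw [hfact y, hR]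
          rcases mul_eq_zero.1 this with h | h
          · rcases mul_eq_zero.1 h with h' | h'
            · exact absurd h' ha3
            · left; linear_combination h'
          · right; linear_combination h
        · rintro (rfl | rfl)
          · rw [← hfact (a*z)]; ring
          · rw [← hfact (a*z+a)]; ring
      rw [hset2, Set.ncard_pair (by intro h; exact ha (by linear_combination -h))]

lemma int_of_integral_rat (x : ℂ) (r : ℚ) (hx : x = (r : ℂ)) (hxint : IsIntegral ℤ x) :
    ∃ C : ℤ, (C : ℚ) = r := by
  have h0 : ((algebraMap ℚ ℂ).toIntAlgHom r : ℂ) = (r : ℂ) := eq_ratCast _ r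
  have h1 : IsIntegral ℤ r := by
    refine (isIntegral_algHom_iff ((algebraMap ℚ ℂ).toIntAlgHom)
      (fun a b hab => (algebraMap ℚ ℂ).injective hab)).1 ?_
    rw [show ((algebraMap ℚ ℂ).toIntAlgHom r : ℂ) = x from h0.trans hx.symm]
    exact hxint
  obtain ⟨C, hC⟩ := IsIntegrallyClosed.isIntegral_iff.mp h1
  exact ⟨C, by rwa [eq_intCast] at hC⟩

open Finset in
lemma partB (m f : ℕ) (hm3 : 3 ≤ m) (hf : 0 < f)
    (hodd : Odd m)
    (F : Type*) [Field F] [Fintype F]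
    (hq : ∃ p n : ℕ, p.Prime ∧ 0 < n ∧ Fintype.card F = p ^ n)
    (hcard : Fintype.card F = m * f + 1)
    (k l : ℕ) (hk : (Mset F m).ncard = k)
    (hl : ∀ a : F, a ≠ 0 →
      {x : F × F | x.1 ∈ Mset F m ∧ x.2 ∈ Mset F m ∧ x.1 - x.2 = a}.ncard = l)
    (hkl : 1 < k - l) :
    Fintype.card F = 16 ∧ m = 3 := by
  classical
  have hm : 0 < m := by omega
  set q := Fintype.card F with hqdef
  set DF : Finset F := (Set.toFinite (Mset F m)).toFinset with hDFdef
  have hDFmem : ∀ x, x ∈ DF ↔ x ∈ Mset F m := fun x => (Set.toFinite _).mem_toFinset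
  have hDF0 : (0:F) ∈ DF := (hDFmem 0).2 (Or.inr rfl)
  have hkf : k = f + 1 := by rw [← hk, mset_ncard F hm hf hcard]
  have hDFcard : DF.card = f + 1 := by
    rw [← Set.ncard_eq_toFinset_card (Mset F m) (Set.toFinite _),
      mset_ncard F hm hf hcard]
  -- pair counts as finset cards
  have hPcard : ∀ b : F, b ≠ 0 → ((DF ×ˢ DF).filter (fun p => p.1 - p.2 = b)).card = l := by
    intro b hb
    have h1 := hl b hb
    rw [← h1, ← Set.ncard_coe_finset]
    congr 1
    ext ⟨x, y⟩
    simp only [Finset.coe_filter, Finset.mem_product, Set.mem_setOf_eq, Finset.mem_coe,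
      hDFmem]
    tauto
  -- double counting : m*l = f+1
  have hml : m * l = f + 1 := by
    have hsplit : (DF ×ˢ DF).card
        = ∑ b : F, ((DF ×ˢ DF).filter (fun p => p.1 - p.2 = b)).card :=
      Finset.card_eq_sum_card_fiberwise (fun p _ => Finset.mem_univ _)
    have hdiag : ((DF ×ˢ DF).filter (fun p => p.1 - p.2 = 0)).card = f + 1 := by
      have heq : (DF ×ˢ DF).filter (fun p => p.1 - p.2 = 0) = DF.image (fun d => (d, d)) := by
        ext ⟨x, y⟩
        simp only [Finset.mem_filter, Finset.mem_product, Finset.mem_image, sub_eq_zero,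
          Prod.mk.injEq]
        constructor
        · rintro ⟨⟨hx, hy⟩, rfl⟩
          exact ⟨x, hx, rfl, rfl⟩
        · rintro ⟨d, hd, rfl, rfl⟩
          exact ⟨⟨hd, hd⟩, rfl⟩
      rw [heq, Finset.card_image_of_injective _ (fun x y h => by simpa using congrArg Prod.fst h),
        hDFcard]
    have herase : ∑ b ∈ Finset.univ.erase (0:F),
        ((DF ×ˢ DF).filter (fun p => p.1 - p.2 = b)).card = (m * f) * l := by
      rw [Finset.sum_congr rfl (fun b hb => hPcard b (Finset.ne_of_mem_erase hb))]
      rw [Finset.sum_const, Finset.card_erase_of_mem (Finset.mem_univ 0), Finset.card_univ,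
        ← hqdef, hcard]
      simp [Nat.mul_comm]
    have htot : (f+1) * (f+1) = (m*f)*l + (f+1) := by
      calc (f+1)*(f+1) = (DF ×ˢ DF).card := by rw [Finset.card_product, hDFcard]
        _ = ∑ b : F, ((DF ×ˢ DF).filter (fun p => p.1 - p.2 = b)).card := hsplit
        _ = (∑ b ∈ Finset.univ.erase (0:F),
              ((DF ×ˢ DF).filter (fun p => p.1 - p.2 = b)).card)
            + ((DF ×ˢ DF).filter (fun p => p.1 - p.2 = 0)).card :=
              (Finset.sum_erase_add _ _ (Finset.mem_univ 0)).symm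
        _ = (m*f)*l + (f+1) := by rw [herase, hdiag]
    have e1z : ((f:ℤ)+1) * ((f:ℤ)+1) = (m:ℤ)*(f:ℤ)*(l:ℤ) + ((f:ℤ)+1) := by exact_mod_cast htot
    have e2 : ((m:ℤ)*(l:ℤ) - ((f:ℤ)+1)) * (f:ℤ) = 0 := by linear_combination -e1z
    have e3 : (m:ℤ)*(l:ℤ) = (f:ℤ)+1 := by
      rcases mul_eq_zero.1 e2 with h | h
      · linarith [sub_eq_zero.1 h]
      · exact absurd h (by exact_mod_cast hf.ne')
    exact_mod_cast e3
  have hl0 : 0 < l := by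
    rcases Nat.eq_zero_or_pos l with h | h
    · rw [h, Nat.mul_zero] at hml; omega
    · exact h
  have hlk : l < k := by omega
  -- additive character setup
  set ψ : AddChar F ℂ := AddChar.FiniteField.primitiveChar_to_Complex F with hψdef
  have hψ : ψ.IsPrimitive := AddChar.FiniteField.primitiveChar_to_Complex_isPrimitive F
  have hsum0 : ∀ b : F, ∑ x : F, ψ (x * b) = if b = 0 then (q : ℂ) else 0 := by
    intro b
    rw [AddChar.sum_mulShift b hψ]
    split_ifs <;> simp <;> rfl
  have hcast0 : ((q : ℕ) : F) = 0 := FiniteField.cast_card_eq_zero F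
  have hvalpow : ∀ t : F, ψ t ^ q = 1 := by
    intro t
    rw [← AddChar.map_nsmul_eq_pow]
    have h0 : (q : ℕ) • t = 0 := by rw [nsmul_eq_mul, hcast0, zero_mul]
    rw [h0, AddChar.map_zero_eq_one]
  have hq2 : 2 ≤ q := by rw [hcard]; nlinarith
  have hint : ∀ t : F, IsIntegral ℤ (ψ t) := by
    intro t
    refine ⟨Polynomial.X ^ q - Polynomial.C 1, Polynomial.monic_X_pow_sub_C 1 (by omega), ?_⟩
    simp [hvalpow t]
  -- character sums over D
  set S : F → ℂ := fun a => ∑ x ∈ DF, ψ (a * x) with hSdef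
  have hS0 : S 0 = ((f+1 : ℕ) : ℂ) := by
    rw [hSdef]
    simp [hDFcard]
  have hSint : ∀ a : F, IsIntegral ℤ (S a) := fun a => IsIntegral.sum _ (fun x _ => hint _)
  -- negation invariance
  have hDneg : ∀ x : F, x ∈ DF ↔ -x ∈ DF := by
    have hstep : ∀ y : F, y ∈ Mset F m → -y ∈ Mset F m := by
      rintro y (⟨hy0, w, rfl⟩ | hy)
      · exact Or.inl ⟨neg_ne_zero.2 hy0, -w, by rw [Odd.neg_pow hodd]⟩
      · right
        simp only [Set.mem_singleton_iff] at hy ⊢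
        rw [hy, neg_zero]
    intro x
    rw [hDFmem, hDFmem]
    exact ⟨hstep x, fun h => by simpa using hstep _ h⟩
  have hSneg : ∀ a : F, S (-a) = S a := by
    intro a
    rw [hSdef]
    refine Finset.sum_equiv (Equiv.neg F) (fun i => by simpa using hDneg i) (fun i hi => ?_)
    simp only [Equiv.neg_apply]
    exact congrArg ψ (by ring)
  -- the key quadratic relation
  have hSS : ∀ a : F, a ≠ 0 → S a * S a = ((k - l : ℕ) : ℂ) := by
    intro a ha
    have expand : S a * S (-a) = ∑ p ∈ DF ×ˢ DF, ψ (a * (p.1 - p.2)) := by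
      rw [hSdef, Finset.sum_mul_sum, ← Finset.sum_product']
      refine Finset.sum_congr rfl (fun p hp => ?_)
      rw [← AddChar.map_add_eq_mul]
      exact congrArg ψ (by ring)
    have hfib : ∑ p ∈ DF ×ˢ DF, ψ (a * (p.1 - p.2))
        = ∑ b : F, ∑ p ∈ (DF ×ˢ DF).filter (fun p => p.1 - p.2 = b), ψ (a * (p.1 - p.2)) :=
      (Finset.sum_fiberwise_of_maps_to (fun p _ => Finset.mem_univ _) _).symm
    have hinner : ∀ b : F, ∑ p ∈ (DF ×ˢ DF).filter (fun p => p.1 - p.2 = b), ψ (a * (p.1 - p.2))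
        = (((DF ×ˢ DF).filter (fun p => p.1 - p.2 = b)).card : ℂ) * ψ (a * b) := by
      intro b
      rw [Finset.sum_congr rfl (fun p hp => by
        rw [(Finset.mem_filter.1 hp).2]), Finset.sum_const, nsmul_eq_mul]
    have hbsum : ∑ b : F, ψ (a * b) = 0 := by
      have := hsum0 a
      rw [if_neg ha] at this
      rw [← this]
      exact Finset.sum_congr rfl (fun b _ => congrArg ψ (by ring))
    calc S a * S a = S a * S (-a) := by rw [hSneg]
      _ = ∑ b : F, (((DF ×ˢ DF).filter (fun p => p.1 - p.2 = b)).card : ℂ) * ψ (a * b) := by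
            rw [expand, hfib]
            exact Finset.sum_congr rfl (fun b _ => hinner b)
      _ = (∑ b ∈ Finset.univ.erase (0:F),
            (((DF ×ˢ DF).filter (fun p => p.1 - p.2 = b)).card : ℂ) * ψ (a * b))
          + (((DF ×ˢ DF).filter (fun p => p.1 - p.2 = 0)).card : ℂ) * ψ (a * 0) :=
            (Finset.sum_erase_add _ _ (Finset.mem_univ 0)).symm
      _ = (l:ℂ) * (∑ b ∈ Finset.univ.erase (0:F), ψ (a * b)) + ((f+1:ℕ):ℂ) := by
            rw [Finset.mul_sum]
            congr 1
            · exact Finset.sum_congr rfl (fun b hb => by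
                rw [hPcard b (Finset.ne_of_mem_erase hb)])
            · have hd : ((DF ×ˢ DF).filter (fun p => p.1 - p.2 = 0)).card = f + 1 := by
                have heq : (DF ×ˢ DF).filter (fun p => p.1 - p.2 = 0)
                    = DF.image (fun d => (d, d)) := by
                  ext ⟨x, y⟩
                  simp only [Finset.mem_filter, Finset.mem_product, Finset.mem_image,
                    sub_eq_zero, Prod.mk.injEq]
                  constructor
                  · rintro ⟨⟨hx, hy⟩, rfl⟩
                    exact ⟨x, hx, rfl, rfl⟩
                  · rintro ⟨d, hd, rfl, rfl⟩
                    exact ⟨⟨hd, hd⟩, rfl⟩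
                rw [heq, Finset.card_image_of_injective _
                  (fun x y h => by simpa using congrArg Prod.fst h), hDFcard]
              rw [hd, mul_zero, AddChar.map_zero_eq_one, mul_one]
      _ = ((k - l : ℕ) : ℂ) := by
            have herase : ∑ b ∈ Finset.univ.erase (0:F), ψ (a * b) = -1 := by
              have h := Finset.sum_erase_add Finset.univ (fun b => ψ (a * b))
                (Finset.mem_univ (0:F))
              rw [hbsum] at h
              simp only [mul_zero, AddChar.map_zero_eq_one] at h
              linear_combination h
            rw [herase, Nat.cast_sub hlk.le, hkf]
            push_cast
            ring
  -- sum of S over nonzero a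
  have hsumS : ∑ a ∈ Finset.univ.erase (0:F), S a = (q : ℂ) - ((f+1 : ℕ) : ℂ) := by
    have hall : ∑ a : F, S a = (q : ℂ) := by
      rw [hSdef]
      rw [Finset.sum_comm]
      rw [Finset.sum_congr rfl (fun x (hx : x ∈ DF) => hsum0 x)]
      rw [Finset.sum_ite_eq' DF (0:F) (fun _ => (q:ℂ))]
      simp [hDF0]
    have h := Finset.sum_erase_add Finset.univ S (Finset.mem_univ (0:F))
    rw [hall, hS0] at h
    linear_combination h
  -- choose a nonzero point, define c
  obtain ⟨a₁, ha₁⟩ := exists_ne (0:F)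
  set c : ℂ := S a₁ with hcdef
  set n := k - l with hndef
  have hc2 : c * c = (n:ℂ) := hSS a₁ ha₁
  have hn2 : 2 ≤ n := by omega
  have hnC : (n:ℂ) ≠ 0 := by
    simpa using (by omega : n ≠ 0)
  have hc0 : c ≠ 0 := fun h => hnC (by rw [← hc2, h, mul_zero])
  have hpm : ∀ a : F, a ≠ 0 → S a = c ∨ S a = -c := by
    intro a ha
    have hz : (S a - c) * (S a + c) = 0 := by
      have h1 := hSS a ha
      linear_combination h1 - hc2
    rcases mul_eq_zero.1 hz with h | h
    · left; linear_combination h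
    · right; linear_combination h
  set ε : F → ℤ := fun a => if S a = c then 1 else -1 with hεdef
  have hSε : ∀ a : F, a ≠ 0 → S a = ((ε a : ℤ) : ℂ) * c := by
    intro a ha
    rcases hpm a ha with h | h
    · have hεa : ε a = 1 := by simp only [hεdef, if_pos h]
      rw [hεa, h]; push_cast; ring
    · have hne : S a ≠ c := by
        rw [h]
        intro hh
        apply hc0
        have h2 : (2:ℂ) * c = 0 := by linear_combination -hh
        rcases mul_eq_zero.1 h2 with h3 | h3
        · norm_num at h3
        · exact h3
      have hεa : ε a = -1 := by simp only [hεdef, if_neg hne]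
      rw [hεa, h]; push_cast; ring
  set E₀ : ℤ := ∑ a ∈ Finset.univ.erase (0:F), ε a with hE₀def
  have hcE : c * (E₀ : ℂ) = (q : ℂ) - ((f+1:ℕ) : ℂ) := by
    rw [← hsumS, hE₀def]
    push_cast
    rw [Finset.mul_sum]
    refine Finset.sum_congr rfl (fun a ha => ?_)
    rw [hSε a (Finset.ne_of_mem_erase ha)]
    ring
  have hqgt : (f+1 : ℕ) < q := by
    have h2f : 2*f ≤ m*f := Nat.mul_le_mul_right f (by omega)
    rw [hcard]; omega
  have hE₀0 : E₀ ≠ 0 := by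
    intro h
    rw [h] at hcE
    simp only [Int.cast_zero, mul_zero] at hcE
    have : (q:ℂ) = ((f+1:ℕ):ℂ) := by linear_combination -hcE
    have : (q:ℕ) = f+1 := Nat.cast_injective this
    omega
  -- c is a rational integer
  set r : ℚ := ((q:ℚ) - ((f+1:ℕ):ℚ))/((E₀:ℤ):ℚ) with hrdef
  have hcr : c = (r : ℂ) := by
    have hE₀C : ((E₀:ℤ):ℂ) ≠ 0 := by exact_mod_cast hE₀0
    rw [hrdef]
    push_cast
    rw [eq_div_iff (by exact_mod_cast hE₀0)]
    push_cast at hcE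
    linear_combination hcE
  obtain ⟨C, hCr⟩ := int_of_integral_rat c r hcr (hSint a₁)
  have hcC : c = (C : ℂ) := by
    rw [hcr, ← hCr]; push_cast; ring
  have hC2 : C * C = (n:ℤ) := by
    have : ((C*C : ℤ):ℂ) = ((n:ℤ):ℂ) := by push_cast; rw [← hcC]; exact_mod_cast hc2
    exact_mod_cast this
  have hC0 : C ≠ 0 := by
    intro h
    rw [h, mul_zero] at hC2
    have : (n:ℤ) = 0 := hC2.symm
    omega
  have hCE : C * E₀ = (m:ℤ)*(f:ℤ) - (f:ℤ) := by
    have hqC : (q:ℂ) = (m:ℂ)*(f:ℂ) + 1 := by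
      rw [hcard]; push_cast; ring
    have : ((C * E₀ : ℤ):ℂ) = (((m:ℤ)*(f:ℤ) - (f:ℤ) : ℤ):ℂ) := by
      push_cast
      rw [← hcC]
      rw [hqC] at hcE
      push_cast at hcE
      linear_combination hcE
    exact_mod_cast this
  -- a point outside D
  have hDne : Mset F m ≠ Set.univ := by
    intro h
    rw [h, Set.ncard_univ, Nat.card_eq_fintype_card] at hk
    rw [← hk, ← hqdef] at hkf
    omega
  obtain ⟨c₀, hc₀⟩ := (Set.ne_univ_iff_exists_notMem _).1 hDne
  have hc₀DF : c₀ ∉ DF := fun h => hc₀ ((hDFmem c₀).1 h)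
  -- Fourier coefficient at c₀
  have hW0 : ∑ a : F, S a * ψ (-(a * c₀)) = 0 := by
    have hterm : ∀ a : F, S a * ψ (-(a * c₀)) = ∑ x ∈ DF, ψ (a * (x - c₀)) := by
      intro a
      rw [hSdef]
      simp only []
      rw [Finset.sum_mul]
      refine Finset.sum_congr rfl (fun x hx => ?_)
      rw [← AddChar.map_add_eq_mul]
      exact congrArg ψ (by ring)
    rw [Finset.sum_congr rfl (fun a _ => hterm a), Finset.sum_comm]
    have hinner0 : ∀ x : F, ∑ a : F, ψ (a * (x - c₀)) = if x - c₀ = 0 then (q:ℂ) else 0 :=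
      fun x => hsum0 (x - c₀)
    rw [Finset.sum_congr rfl (fun x _ => hinner0 x)]
    apply Finset.sum_eq_zero
    intro x hx
    rw [if_neg]
    intro h
    exact hc₀DF (by rwa [sub_eq_zero.1 h] at hx)
  have hWerase : ∑ a ∈ Finset.univ.erase (0:F), S a * ψ (-(a * c₀)) = -((f+1:ℕ):ℂ) := by
    have h := Finset.sum_erase_add Finset.univ (fun a => S a * ψ (-(a * c₀)))
      (Finset.mem_univ (0:F))
    rw [hW0] at h
    simp only [zero_mul, neg_zero, AddChar.map_zero_eq_one, mul_one, hS0] at h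
    linear_combination h
  set W : ℂ := ∑ a ∈ Finset.univ.erase (0:F), ((ε a : ℤ):ℂ) * ψ (-(a * c₀)) with hWdef
  have hcW : c * W = -((f+1:ℕ):ℂ) := by
    rw [hWdef, Finset.mul_sum, ← hWerase]
    refine Finset.sum_congr rfl (fun a ha => ?_)
    rw [hSε a (Finset.ne_of_mem_erase ha)]
    ring
  have hWint : IsIntegral ℤ W := by
    refine IsIntegral.sum _ (fun a _ => IsIntegral.mul ?_ (hint _))
    exact (eq_intCast (algebraMap ℤ ℂ) (ε a)) ▸ isIntegral_algebraMap
  set r2 : ℚ := (-((f+1:ℕ):ℚ))/((C:ℤ):ℚ) with hr2def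
  have hWr : W = (r2 : ℂ) := by
    rw [hr2def]
    push_cast
    rw [eq_div_iff (by exact_mod_cast hC0)]
    rw [hcC] at hcW
    push_cast at hcW
    linear_combination hcW
  obtain ⟨J, hJr⟩ := int_of_integral_rat W r2 hWr hWint
  have hCJ : C * J = -((f:ℤ)+1) := by
    have hWC : W = (J:ℂ) := by rw [hWr, ← hJr]; push_cast; ring
    have : ((C * J : ℤ):ℂ) = ((-((f:ℤ)+1) : ℤ):ℂ) := by
      push_cast
      rw [← hcC, ← hWC]
      push_cast at hcW
      linear_combination hcW
    exact_mod_cast this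
  -- integer endgame
  have hmlz : (m:ℤ) * (l:ℤ) = (f:ℤ) + 1 := by exact_mod_cast hml
  have hnz : (n:ℤ) = (l:ℤ)*((m:ℤ)-1) := by
    have h1 : (n:ℤ) = (k:ℤ) - (l:ℤ) := by
      rw [hndef]; push_cast [Nat.cast_sub hlk.le]; ring
    have h2 : (k:ℤ) = (f:ℤ) + 1 := by exact_mod_cast hkf
    rw [h1, h2, ← hmlz]; ring
  have hdvd1 : C ∣ (m:ℤ) - 1 := by
    have d1 : C ∣ (m:ℤ)*(l:ℤ) := ⟨-J, by linear_combination hCJ + hmlz⟩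
    have d2 : C ∣ ((m:ℤ)*(l:ℤ) - 1)*((m:ℤ)-1) := ⟨E₀, by
      rw [hmlz]
      linear_combination -hCE⟩
    have d3 : C ∣ ((m:ℤ)*(l:ℤ))*((m:ℤ)-1) := d1.mul_right _
    have hid : (m:ℤ) - 1 = ((m:ℤ)*(l:ℤ))*((m:ℤ)-1) - ((m:ℤ)*(l:ℤ) - 1)*((m:ℤ)-1) := by ring
    rw [hid]
    exact dvd_sub d3 d2
  obtain ⟨e, he⟩ := hdvd1
  have hCle : C = (l:ℤ) * e := by
    have h1 : C * C = C * ((l:ℤ) * e) := by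
      rw [hC2, hnz, he]; ring
    exact mul_left_cancel₀ hC0 h1
  have hlz0 : (l:ℤ) ≠ 0 := by exact_mod_cast hl0.ne'
  have heJ : e * J = -(m:ℤ) := by
    have h1 : (l:ℤ) * (e * J) = (l:ℤ) * (-(m:ℤ)) := by
      have h2 := hCJ
      rw [hCle] at h2
      linear_combination h2 + hmlz
    exact mul_left_cancel₀ hlz0 h1
  have he1 : e*e = 1 := by
    have hdm : e ∣ (m:ℤ) := ⟨-J, by linear_combination heJ⟩
    have hdm1 : e ∣ (m:ℤ) - 1 := ⟨C, by rw [he, hCle]; ring⟩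
    have hd : e ∣ 1 := by
      have hid : (1:ℤ) = (m:ℤ) - ((m:ℤ)-1) := by ring
      rw [hid]
      exact dvd_sub hdm hdm1
    rcases Int.isUnit_iff.1 (isUnit_of_dvd_one hd) with h | h <;> rw [h] <;> ring
  have hlm : (l:ℤ) = (m:ℤ) - 1 := by
    have : (m:ℤ)-1 = (l:ℤ)*(e*e) := by rw [he, hCle]; ring
    rw [this, he1]; ring
  have hlm' : m = l + 1 := by
    have : (m:ℤ) = (l:ℤ) + 1 := by linarith
    exact_mod_cast this
  have hl2 : 2 ≤ l := by omega
  have hq16 : q = l*l*(l+2) := by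
    have hfz : (f:ℤ) = (m:ℤ)*(l:ℤ) - 1 := by linarith [hmlz]
    have hz : (q:ℤ) = (l:ℤ)*(l:ℤ)*((l:ℤ)+2) := by
      have h1 : (q:ℤ) = (m:ℤ)*(f:ℤ)+1 := by exact_mod_cast hcard
      rw [h1, hfz, show (m:ℤ) = (l:ℤ)+1 from by linarith]
      ring
    exact_mod_cast hz
  obtain ⟨p, nn, hp, hnn, hqp⟩ := hq
  have hdl : l ∣ p ^ nn := by rw [← hqp, hq16]; exact ⟨l*(l+2), by ring⟩
  have hdl2 : l + 2 ∣ p ^ nn := by rw [← hqp, hq16]; exact ⟨l*l, by ring⟩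
  obtain ⟨i, hi, hli⟩ := (Nat.dvd_prime_pow hp).1 hdl
  obtain ⟨j, hj, hlj⟩ := (Nat.dvd_prime_pow hp).1 hdl2
  have hi1 : 1 ≤ i := by
    rcases Nat.eq_zero_or_pos i with h | h
    · rw [h, pow_zero] at hli; omega
    · exact h
  have hj1 : 1 ≤ j := by
    rcases Nat.eq_zero_or_pos j with h | h
    · rw [h, pow_zero] at hlj; omega
    · exact h
  have hp2 : p = 2 := by
    have hpl : p ∣ l := hli ▸ dvd_pow_self p (by omega)
    have hpl2 : p ∣ l + 2 := hlj ▸ dvd_pow_self p (by omega)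
    have hpd2 : p ∣ 2 := by
      have := Nat.dvd_sub hpl2 hpl
      simpa using this
    exact (Nat.prime_dvd_prime_iff_eq hp Nat.prime_two).1 hpd2
  subst hp2
  have hj2 : 2 ≤ j := by
    by_contra h
    push_neg at h
    interval_cases j <;> omega
  have hii : i = 1 := by
    by_contra h
    have hi2 : 2 ≤ i := by omega
    have h4 : (4:ℕ) ∣ 2^i := by
      have : (2:ℕ)^2 ∣ 2^i := pow_dvd_pow 2 hi2
      simpa using this
    have h4' : (4:ℕ) ∣ 2^j := by
      have : (2:ℕ)^2 ∣ 2^j := pow_dvd_pow 2 hj2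
      simpa using this
    omega
  have hlval : l = 2 := by rw [hli, hii, pow_one]
  constructor
  · rw [hq16, hlval]
  · omega

lemma m_one_trivial (F : Type*) [Field F] [Fintype F] (k l : ℕ)
    (hk : (Mset F 1).ncard = k)
    (hl : ∀ a : F, a ≠ 0 →
      {x : F × F | x.1 ∈ Mset F 1 ∧ x.2 ∈ Mset F 1 ∧ x.1 - x.2 = a}.ncard = l) :
    k = l := by
  have hMuniv : Mset F 1 = Set.univ := by
    apply Set.eq_univ_of_forall
    intro x
    rcases eq_or_ne x 0 with h | h
    · exact Or.inr h
    · exact Or.inl ⟨h, x, pow_one x⟩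
  have hone := hl 1 one_ne_zero
  have hset : {x : F × F | x.1 ∈ Mset F 1 ∧ x.2 ∈ Mset F 1 ∧ x.1 - x.2 = 1}
      = (fun y : F => (1 + y, y)) '' Set.univ := by
    ext ⟨x, y⟩
    simp only [Set.mem_setOf_eq, Set.mem_image, Set.mem_univ, true_and, Prod.mk.injEq,
      hMuniv]
    constructor
    · intro h3
      exact ⟨y, by linear_combination -h3, rfl⟩
    · rintro ⟨y', h1, rfl⟩
      linear_combination -h1
  rw [hset, Set.ncard_image_of_injective _
    (fun y1 y2 h => by simpa using congrArg Prod.snd h), Set.ncard_univ,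
    Nat.card_eq_fintype_card] at hone
  rw [hMuniv, Set.ncard_univ, Nat.card_eq_fintype_card] at hk
  omega

theorem stmt7 (m f : ℕ) (hm : 0 < m) (hf : 0 < f) (hodd : Odd m)
    (F : Type*) [Field F] [Fintype F]
    (hq : ∃ p n : ℕ, p.Prime ∧ 0 < n ∧ Fintype.card F = p ^ n)
    (hcard : Fintype.card F = m * f + 1) :
    (IsNontrivialDiffSet (Mset F m) ↔ Fintype.card F = 16 ∧ m = 3) ∧
      (Fintype.card F = 16 → m = 3 → IsDiffSet (Mset F m) 6 2) := by
  have hA : Fintype.card F = 16 → m = 3 → IsDiffSet (Mset F m) 6 2 := by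
    intro h16 h3
    subst h3
    exact partA F h16
  refine ⟨⟨?_, ?_⟩, hA⟩
  · rintro ⟨k, l, ⟨hk, hl⟩, hkl⟩
    have hm1 : m ≠ 1 := by
      rintro rfl
      have := m_one_trivial F k l hk hl
      omega
    have hm3 : 3 ≤ m := by
      obtain ⟨t, ht⟩ := hodd
      omega
    exact partB m f hm3 hf hodd F hq hcard k l hk hl hkl
  · rintro ⟨h16, h3⟩
    exact ⟨6, 2, hA h16 h3, by norm_num⟩
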